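/- For s ∈ (0,1), the integral ∫₀^{δ} y^{1/s} · (log(e + y^{-1/s}))^{1/s} dy over (0,δ) for small δ > 0 is finite, and as a function of the lower cutoff it satisfies: the integral from a_{k+1} to a_k, where a_k = ∑_{j≥k} j^{-2}, is comparable to k^{-2-1/s} · (log k)^{1/s} for large k. -/

import Mathlib

open MeasureTheory Real Set

/-- `aSeq k = ∑_{j ≥ k} 1/j²`. -/
noncomputable def aSeq (k : ℕ) : ℝ := ∑' j : ℕ, 1 / ((j : ℝ) + (k : ℝ)) ^ 2

lemma summable_aSeq (k : ℕ) : Summable (fun j : ℕ => 1 / ((j:ℝ) + (k:ℝ)) ^ 2) := by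
  have h : Summable (fun n : ℕ => 1 / (n:ℝ) ^ 2) := by
    simpa using Real.summable_one_div_nat_pow.mpr (by norm_num : 2 ≤ 2)
  have := (summable_nat_add_iff k).mpr h
  refine this.congr fun j => ?_
  push_cast
  ring_nf

lemma telescope (k : ℕ) (hk : 1 ≤ k) :
    HasSum (fun j : ℕ => 1/((j:ℝ)+(k:ℝ)) - 1/((j:ℝ)+(k:ℝ)+1)) (1/(k:ℝ)) := by
  have hk0 : (0:ℝ) < k := by exact_mod_cast hk
  have hnn : ∀ j : ℕ, 0 ≤ 1/((j:ℝ)+(k:ℝ)) - 1/((j:ℝ)+(k:ℝ)+1) := by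
    intro j
    have h1 : (0:ℝ) < (j:ℝ)+(k:ℝ) := by positivity
    have : 1/((j:ℝ)+(k:ℝ)+1) ≤ 1/((j:ℝ)+(k:ℝ)) := by
      apply one_div_le_one_div_of_le h1; linarith
    linarith
  rw [hasSum_iff_tendsto_nat_of_nonneg hnn]
  have hsum : ∀ n : ℕ, ∑ j ∈ Finset.range n, (1/((j:ℝ)+(k:ℝ)) - 1/((j:ℝ)+(k:ℝ)+1))
      = 1/(k:ℝ) - 1/((n:ℝ)+(k:ℝ)) := by
    intro n
    induction n with
    | zero => simp
    | succ n ih =>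
      rw [Finset.sum_range_succ, ih]
      push_cast
      ring
  simp_rw [hsum]
  have : Filter.Tendsto (fun n : ℕ => 1/((n:ℝ)+(k:ℝ))) Filter.atTop (nhds 0) := by
    simp_rw [one_div]
    apply Filter.Tendsto.comp tendsto_inv_atTop_zero
    apply Filter.tendsto_atTop_add_const_right
    exact tendsto_natCast_atTop_atTop
  simpa using Filter.Tendsto.sub (tendsto_const_nhds) this

lemma aSeq_ge (k : ℕ) (hk : 1 ≤ k) : 1/(k:ℝ) ≤ aSeq k := by
  have hk0 : (0:ℝ) < k := by exact_mod_cast hk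
  have ht := telescope k hk
  rw [← ht.tsum_eq]
  apply Summable.tsum_le_tsum _ ht.summable (summable_aSeq k)
  intro j
  have h1 : (0:ℝ) < (j:ℝ)+(k:ℝ) := by positivity
  rw [div_sub_div _ _ (ne_of_gt h1) (by positivity), div_le_div_iff₀ (by positivity) (by positivity)]
  ring_nf
  nlinarith

lemma aSeq_le (k : ℕ) (hk : 1 ≤ k) : aSeq k ≤ 2/(k:ℝ) := by
  have hk0 : (0:ℝ) < k := by exact_mod_cast hk
  have hk1 : (1:ℝ) ≤ k := by exact_mod_cast hk
  have ht := (telescope k hk).mul_left 2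
  have h2 : (2:ℝ) * (1/(k:ℝ)) = 2/(k:ℝ) := by ring
  rw [h2] at ht
  rw [← ht.tsum_eq]
  apply Summable.tsum_le_tsum _ (summable_aSeq k) ht.summable
  intro j
  have h1 : (0:ℝ) < (j:ℝ)+(k:ℝ) := by positivity
  have h1' : (1:ℝ) ≤ (j:ℝ)+(k:ℝ) := by
    have : (0:ℝ) ≤ j := Nat.cast_nonneg j
    linarith
  rw [div_sub_div _ _ (ne_of_gt h1) (by positivity)]
  rw [show (1:ℝ) * ((j:ℝ)+(k:ℝ)+1) - ((j:ℝ)+(k:ℝ)) * 1 = 1 by ring]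
  rw [mul_one_div, div_le_div_iff₀ (by positivity) (by positivity)]
  nlinarith

lemma aSeq_succ (k : ℕ) : aSeq k = 1/(k:ℝ)^2 + aSeq (k+1) := by
  unfold aSeq
  rw [(summable_aSeq k).tsum_eq_zero_add]
  congr 1
  · norm_num
  · apply tsum_congr
    intro j
    push_cast
    ring_nf


lemma integrable_f (s : ℝ) (hs : s ∈ Set.Ioo (0:ℝ) 1) (δ : ℝ) (hδ : 0 < δ) :
    IntegrableOn
      (fun y : ℝ => y ^ (1 / s) * Real.log (Real.exp 1 + y ^ (-(1 / s))) ^ (1 / s))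
      (Set.Ioo 0 δ) volume := by
  obtain ⟨hs0, hs1⟩ := hs
  have hs2 : (0:ℝ) < s/2 := by linarith
  set B : ℝ := (Real.exp 1 + 1)^(s/2)/(s/2) * max 1 δ with hB
  have hBpos : 0 < B := by positivity
  have hcont : ContinuousOn
      (fun y : ℝ => y ^ (1 / s) * Real.log (Real.exp 1 + y ^ (-(1 / s))) ^ (1 / s))
      (Set.Ioo 0 δ) := by
    apply ContinuousOn.mul
    · exact continuousOn_id.rpow_const (fun x hx => Or.inr (by positivity))
    · apply ContinuousOn.rpow_const
      · apply ContinuousOn.log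
        · exact continuousOn_const.add (continuousOn_id.rpow_const
            (fun x hx => Or.inl (ne_of_gt hx.1)))
        · intro x hx
          have : (0:ℝ) < x ^ (-(1/s)) := Real.rpow_pos_of_pos hx.1 _
          have := Real.exp_pos 1
          positivity
      · exact fun x hx => Or.inr (by positivity)
  refine ⟨hcont.aestronglyMeasurable measurableSet_Ioo,
    MeasureTheory.HasFiniteIntegral.restrict_of_bounded (C := B^(1/s))
      (by simp [Real.volume_Ioo]) ?_⟩
  · rw [ae_restrict_iff' measurableSet_Ioo]
    apply Filter.Eventually.of_forall
    intro y hy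
    obtain ⟨hy0, hyδ⟩ := hy
    have hyp : (0:ℝ) < y ^ (-(1/s)) := Real.rpow_pos_of_pos hy0 _
    have hL1 : (1:ℝ) ≤ Real.log (Real.exp 1 + y ^ (-(1/s))) := by
      have := Real.log_le_log (Real.exp_pos 1)
        (by linarith : Real.exp 1 ≤ Real.exp 1 + y ^ (-(1/s)))
      simpa using this
    have hL0 : (0:ℝ) ≤ Real.log (Real.exp 1 + y ^ (-(1/s))) := by linarith
    rw [norm_eq_abs, abs_of_nonneg (by positivity)]
    rw [← Real.mul_rpow hy0.le hL0]
    apply Real.rpow_le_rpow (by positivity) _ (by positivity)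
    have hlog : Real.log (Real.exp 1 + y ^ (-(1/s))) ≤ (Real.exp 1 + y ^ (-(1/s)))^(s/2)/(s/2) :=
      Real.log_le_rpow_div (by positivity) hs2
    rcases le_or_gt y 1 with hy1 | hy1
    · have ht1 : (1:ℝ) ≤ y ^ (-(1/s)) :=
        Real.one_le_rpow_of_pos_of_le_one_of_nonpos hy0 hy1 (neg_nonpos_of_nonneg (by positivity))
      have h1 : Real.exp 1 + y ^ (-(1/s)) ≤ (Real.exp 1 + 1) * y ^ (-(1/s)) := by
        have he : (0:ℝ) < Real.exp 1 := Real.exp_pos 1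
        nlinarith
      have h3 : (y ^ (-(1/s)))^(s/2) = y ^ (-(1/2) : ℝ) := by
        rw [← Real.rpow_mul hy0.le]
        congr 1
        field_simp
      have h2 : (Real.exp 1 + y ^ (-(1/s)))^(s/2)
          ≤ (Real.exp 1 + 1)^(s/2) * y ^ (-(1/2):ℝ) := by
        rw [← h3, ← Real.mul_rpow (by positivity) hyp.le]
        exact Real.rpow_le_rpow (by positivity) h1 hs2.le
      have h4 : y * Real.log (Real.exp 1 + y ^ (-(1/s)))
          ≤ y * ((Real.exp 1 + 1)^(s/2) * y ^ (-(1/2):ℝ) / (s/2)) := by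
        apply mul_le_mul_of_nonneg_left _ hy0.le
        refine hlog.trans ?_
        gcongr
      have h6 : y * y ^ (-(1/2):ℝ) = y ^ ((1:ℝ)/2) := by
        nth_rewrite 1 [← Real.rpow_one y]
        rw [← Real.rpow_add hy0]
        norm_num
      have h7 : y ^ ((1:ℝ)/2) ≤ 1 := Real.rpow_le_one hy0.le hy1 (by norm_num)
      calc y * Real.log (Real.exp 1 + y ^ (-(1/s))) ≤ _ := h4
        _ = (Real.exp 1 + 1)^(s/2)/(s/2) * (y * y ^ (-(1/2):ℝ)) := by ring
        _ = (Real.exp 1 + 1)^(s/2)/(s/2) * y ^ ((1:ℝ)/2) := by rw [h6]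
        _ ≤ (Real.exp 1 + 1)^(s/2)/(s/2) * 1 :=
            mul_le_mul_of_nonneg_left h7 (by positivity)
        _ ≤ B := by
            rw [hB, mul_one]
            exact le_mul_of_one_le_right (by positivity) (le_max_left 1 δ)
    · have ht1 : y ^ (-(1/s)) ≤ 1 :=
        Real.rpow_le_one_of_one_le_of_nonpos hy1.le (neg_nonpos_of_nonneg (by positivity))
      have h2 : (Real.exp 1 + y ^ (-(1/s)))^(s/2) ≤ (Real.exp 1 + 1)^(s/2) :=
        Real.rpow_le_rpow (by positivity) (by linarith) hs2.le
      have h4 : Real.log (Real.exp 1 + y ^ (-(1/s))) ≤ (Real.exp 1 + 1)^(s/2)/(s/2) := by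
        refine hlog.trans ?_
        gcongr
      calc y * Real.log (Real.exp 1 + y ^ (-(1/s)))
          ≤ y * ((Real.exp 1 + 1)^(s/2)/(s/2)) :=
            mul_le_mul_of_nonneg_left h4 (by linarith)
        _ ≤ max 1 δ * ((Real.exp 1 + 1)^(s/2)/(s/2)) :=
            mul_le_mul_of_nonneg_right (hyδ.le.trans (le_max_right 1 δ)) (by positivity)
        _ = B := by rw [hB]; ring

theorem stmt_15 (s : ℝ) (hs : s ∈ Set.Ioo (0:ℝ) 1) :
    (∀ δ : ℝ, 0 < δ →
      IntegrableOn
        (fun y : ℝ => y ^ (1 / s) * Real.log (Real.exp 1 + y ^ (-(1 / s))) ^ (1 / s))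
        (Set.Ioo 0 δ) volume) ∧
    ∃ c C : ℝ, 0 < c ∧ 0 < C ∧ ∃ K : ℕ, ∀ k : ℕ, K ≤ k →
      c * (k : ℝ) ^ (-(2:ℝ) - 1 / s) * Real.log (k : ℝ) ^ (1 / s) ≤
        (∫ y in Set.Ioo (aSeq (k + 1)) (aSeq k),
          y ^ (1 / s) * Real.log (Real.exp 1 + y ^ (-(1 / s))) ^ (1 / s)) ∧
      (∫ y in Set.Ioo (aSeq (k + 1)) (aSeq k),
          y ^ (1 / s) * Real.log (Real.exp 1 + y ^ (-(1 / s))) ^ (1 / s)) ≤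
        C * (k : ℝ) ^ (-(2:ℝ) - 1 / s) * Real.log (k : ℝ) ^ (1 / s) := by
  obtain ⟨hs0, hs1⟩ := hs
  have h1s : (1:ℝ) ≤ 1/s := by
    rw [le_div_iff₀ hs0]; linarith
  refine ⟨fun δ hδ => integrable_f s ⟨hs0, hs1⟩ δ hδ, (1/(4*s))^(1/s), (6/s)^(1/s),
    by positivity, by positivity, 4, fun k hk => ?_⟩
  have hk1 : 1 ≤ k := by omega
  have hk0 : (0:ℝ) < k := by exact_mod_cast hk1
  have hk4 : (4:ℝ) ≤ k := by exact_mod_cast hk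
  have hk1' : (1:ℝ) ≤ k := by linarith
  -- log facts
  have hlog2 : (0.6931471803:ℝ) < Real.log 2 := Real.log_two_gt_d9
  have hlog4 : Real.log 4 = 2 * Real.log 2 := by
    rw [show (4:ℝ) = 2^2 by norm_num, Real.log_pow]; push_cast; ring
  have hlog2k : 2 * Real.log 2 ≤ Real.log k := by
    rw [← hlog4]; exact Real.log_le_log (by norm_num) hk4
  have hlogk1 : (1:ℝ) ≤ Real.log k := by linarith
  have hlogk0 : (0:ℝ) ≤ Real.log k := by linarith
  have hlog2k' : Real.log 2 ≤ Real.log k := by linarith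
  -- aSeq facts
  have hIpos : (0:ℝ) < aSeq (k+1) := by
    have h := aSeq_ge (k+1) (by omega)
    have : (0:ℝ) < 1/((k:ℝ)+1) := by positivity
    push_cast at h
    linarith
  have hlow : 1/(2*(k:ℝ)) ≤ aSeq (k+1) := by
    have h := aSeq_ge (k+1) (by omega)
    push_cast at h
    refine le_trans ?_ h
    rw [div_le_div_iff₀ (by positivity) (by positivity)]
    linarith
  have hup : aSeq k ≤ 2/(k:ℝ) := aSeq_le k hk1
  have hsub : aSeq k - aSeq (k+1) = 1/(k:ℝ)^2 := by
    have := aSeq_succ k; linarith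
  have hak_pos : (0:ℝ) < aSeq k := by
    have := aSeq_ge k hk1
    have : (0:ℝ) < 1/(k:ℝ) := by positivity
    linarith [aSeq_ge k hk1]
  set f : ℝ → ℝ := fun y : ℝ => y ^ (1 / s) * Real.log (Real.exp 1 + y ^ (-(1 / s))) ^ (1 / s)
    with hf
  set mlow : ℝ := (1/(2*(k:ℝ)))^(1/s) * ((1/(2*s)) * Real.log k)^(1/s) with hmlow_def
  set mup : ℝ := (2/(k:ℝ))^(1/s) * ((3/s) * Real.log k)^(1/s) with hmup_def
  -- pointwise bounds
  have hbnd : ∀ y ∈ Set.Ioo (aSeq (k+1)) (aSeq k), mlow ≤ f y ∧ f y ≤ mup := by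
    intro y hy
    obtain ⟨hy1, hy2⟩ := hy
    have hy0 : (0:ℝ) < y := lt_trans hIpos hy1
    have hylow : 1/(2*(k:ℝ)) ≤ y := le_trans hlow hy1.le
    have hyup : y ≤ 2/(k:ℝ) := le_trans hy2.le hup
    have hyp : (0:ℝ) < y ^ (-(1/s)) := Real.rpow_pos_of_pos hy0 _
    constructor
    · -- lower bound
      have t1 : (1/(2*(k:ℝ)))^(1/s) ≤ y^(1/s) :=
        Real.rpow_le_rpow (by positivity) hylow (by positivity)
      have t2 : (2/(k:ℝ))^(-(1/s)) ≤ y^(-(1/s)) :=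
        Real.rpow_le_rpow_of_nonpos hy0 hyup (neg_nonpos_of_nonneg (by positivity))
      have t3 : (1/(2*s)) * Real.log k ≤ Real.log (Real.exp 1 + y ^ (-(1/s))) := by
        have e1 : Real.log ((2/(k:ℝ))^(-(1/s))) = (1/s) * (Real.log k - Real.log 2) := by
          rw [Real.log_rpow (by positivity), Real.log_div (by norm_num) (ne_of_gt hk0)]
          ring
        have e2 : (1/(2*s)) * Real.log k ≤ (1/s) * (Real.log k - Real.log 2) := by
          have h' : Real.log k / 2 ≤ Real.log k - Real.log 2 := by linarith
          have := mul_le_mul_of_nonneg_left h' (by positivity : (0:ℝ) ≤ 1/s)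
          calc (1/(2*s)) * Real.log k = (1/s) * (Real.log k / 2) := by ring
            _ ≤ (1/s) * (Real.log k - Real.log 2) := this
        have e3 : Real.log ((2/(k:ℝ))^(-(1/s))) ≤ Real.log (Real.exp 1 + y ^ (-(1/s))) := by
          apply Real.log_le_log (Real.rpow_pos_of_pos (by positivity) _)
          have := Real.exp_pos 1
          linarith
        linarith [e1 ▸ e3]
      have t4 : ((1/(2*s)) * Real.log k)^(1/s)
          ≤ Real.log (Real.exp 1 + y ^ (-(1/s)))^(1/s) :=
        Real.rpow_le_rpow (by positivity) t3 (by positivity)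
      exact mul_le_mul t1 t4 (by positivity) (by positivity)
    · -- upper bound
      have u1 : y^(1/s) ≤ (2/(k:ℝ))^(1/s) :=
        Real.rpow_le_rpow hy0.le hyup (by positivity)
      have u2 : y^(-(1/s)) ≤ (2*(k:ℝ))^(1/s) := by
        have h' := Real.rpow_le_rpow_of_nonpos (by positivity : (0:ℝ) < 1/(2*(k:ℝ)))
          hylow (neg_nonpos_of_nonneg (by positivity : (0:ℝ) ≤ 1/s))
        have hesq : (1/(2*(k:ℝ)))^(-(1/s)) = (2*(k:ℝ))^(1/s) := by
          rw [show (1/(2*(k:ℝ))) = (2*(k:ℝ))⁻¹ from one_div _,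
            Real.inv_rpow (by positivity), ← Real.rpow_neg (by positivity), neg_neg]
        rwa [hesq] at h'
      have hx2 : (2:ℝ) ≤ (2*(k:ℝ))^(1/s) := by
        have : ((2*(k:ℝ)):ℝ)^((1:ℝ)) ≤ (2*(k:ℝ))^(1/s) :=
          Real.rpow_le_rpow_of_exponent_le (by linarith) h1s
        rw [Real.rpow_one] at this
        linarith
      have he2 : (2:ℝ) ≤ Real.exp 1 := by
        have := Real.exp_one_gt_d9; linarith
      have u3 : Real.log (Real.exp 1 + y ^ (-(1/s))) ≤ (3/s) * Real.log k := by
        have s1 : Real.log (Real.exp 1 + y ^ (-(1/s)))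
            ≤ Real.log (Real.exp 1 + (2*(k:ℝ))^(1/s)) := by
          apply Real.log_le_log (by positivity)
          linarith
        have s2 : Real.exp 1 + (2*(k:ℝ))^(1/s) ≤ Real.exp 1 * (2*(k:ℝ))^(1/s) := by
          nlinarith [Real.exp_pos 1]
        have s3 : Real.log (Real.exp 1 + (2*(k:ℝ))^(1/s))
            ≤ Real.log (Real.exp 1 * (2*(k:ℝ))^(1/s)) := by
          apply Real.log_le_log (by positivity) s2
        have s4 : Real.log (Real.exp 1 * (2*(k:ℝ))^(1/s))
            = 1 + (1/s) * (Real.log 2 + Real.log k) := by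
          rw [Real.log_mul (Real.exp_ne_zero 1) (by positivity), Real.log_exp,
            Real.log_rpow (by positivity), Real.log_mul (by norm_num) (ne_of_gt hk0)]
        have s5 : 1 + (1/s) * (Real.log 2 + Real.log k) ≤ (3/s) * Real.log k := by
          have a1 : (1:ℝ) ≤ (1/s) * Real.log k := by nlinarith
          have a2 : (1/s) * Real.log 2 ≤ (1/s) * Real.log k :=
            mul_le_mul_of_nonneg_left hlog2k' (by positivity)
          have : (3/s) * Real.log k = (1/s)*Real.log k + (1/s)*Real.log k + (1/s)*Real.log k := by
            ring
          linarith
        linarith [s4 ▸ s3]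
      have hL1 : (1:ℝ) ≤ Real.log (Real.exp 1 + y ^ (-(1/s))) := by
        have := Real.log_le_log (Real.exp_pos 1)
          (by linarith : Real.exp 1 ≤ Real.exp 1 + y ^ (-(1/s)))
        simpa using this
      have u4 : Real.log (Real.exp 1 + y ^ (-(1/s)))^(1/s) ≤ ((3/s) * Real.log k)^(1/s) :=
        Real.rpow_le_rpow (by linarith) u3 (by positivity)
      exact mul_le_mul u1 u4 (by positivity) (by positivity)
  -- integral facts
  have hInt : IntegrableOn f (Set.Ioo (aSeq (k+1)) (aSeq k)) volume :=
    (integrable_f s ⟨hs0, hs1⟩ (aSeq k) hak_pos).mono_set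
      (Set.Ioo_subset_Ioo hIpos.le le_rfl)
  have hvol : (volume (Set.Ioo (aSeq (k+1)) (aSeq k))).toReal = 1/(k:ℝ)^2 := by
    rw [Real.volume_Ioo, ENNReal.toReal_ofReal (by rw [hsub]; positivity)]
    linarith
  have hconst_int : ∀ m : ℝ, ∫ _ in Set.Ioo (aSeq (k+1)) (aSeq k), m = m * (1/(k:ℝ)^2) := by
    intro m
    rw [setIntegral_const, measureReal_def, hvol, smul_eq_mul]
    ring
  have hIlow : mlow * (1/(k:ℝ)^2) ≤ ∫ y in Set.Ioo (aSeq (k+1)) (aSeq k), f y := by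
    rw [← hconst_int mlow]
    exact setIntegral_mono_on
      (integrableOn_const (by rw [Real.volume_Ioo]; exact ENNReal.ofReal_ne_top))
      hInt measurableSet_Ioo (fun y hy => (hbnd y hy).1)
  have hIup : (∫ y in Set.Ioo (aSeq (k+1)) (aSeq k), f y) ≤ mup * (1/(k:ℝ)^2) := by
    rw [← hconst_int mup]
    exact setIntegral_mono_on hInt
      (integrableOn_const (by rw [Real.volume_Ioo]; exact ENNReal.ofReal_ne_top))
      measurableSet_Ioo (fun y hy => (hbnd y hy).2)
  -- algebra
  have key : (k:ℝ)^(-(2:ℝ) - 1/s) = (1/(k:ℝ))^(1/s) * (1/(k:ℝ)^2) := by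
    rw [show -(2:ℝ) - 1/s = (-(1/s)) + (-(2:ℝ)) by ring, Real.rpow_add hk0]
    congr 1
    · rw [Real.rpow_neg hk0.le, show (1/(k:ℝ)) = (k:ℝ)⁻¹ from one_div _,
        Real.inv_rpow hk0.le]
    · rw [show (-(2:ℝ)) = ((-2:ℤ):ℝ) by norm_num, Real.rpow_intCast, zpow_neg, one_div]
      norm_num
  have e2low : (1/(2*(k:ℝ)))^(1/s) * (1/(2*s))^(1/s) = (1/(4*s))^(1/s) * (1/(k:ℝ))^(1/s) := by
    rw [← Real.mul_rpow (by positivity) (by positivity),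
      ← Real.mul_rpow (by positivity) (by positivity)]
    congr 1
    field_simp
    ring
  have e2up : (2/(k:ℝ))^(1/s) * (3/s)^(1/s) = (6/s)^(1/s) * (1/(k:ℝ))^(1/s) := by
    rw [← Real.mul_rpow (by positivity) (by positivity),
      ← Real.mul_rpow (by positivity) (by positivity)]
    congr 1
    field_simp
    ring
  have hceq : (1/(4*s))^(1/s) * (k:ℝ)^(-(2:ℝ) - 1/s) * Real.log k^(1/s)
      = mlow * (1/(k:ℝ)^2) := by
    rw [key, hmlow_def, Real.mul_rpow (by positivity) hlogk0]
    linear_combination (-(1/(k:ℝ)^2 * Real.log (k:ℝ)^(1/s))) * e2low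
  have hCeq : (6/s)^(1/s) * (k:ℝ)^(-(2:ℝ) - 1/s) * Real.log k^(1/s)
      = mup * (1/(k:ℝ)^2) := by
    rw [key, hmup_def, Real.mul_rpow (by positivity) hlogk0]
    linear_combination (-(1/(k:ℝ)^2 * Real.log (k:ℝ)^(1/s))) * e2up
  constructor
  · rw [hceq]; exact hIlow
  · rw [hCeq]; exact hIup
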